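/- For every λ ∈ ℝ, ∫₀¹ Φ( Φ^{-1}(u) + λ ) du = Φ( λ / √2 ). -/

import Mathlib

open MeasureTheory ProbabilityTheory Real

/-- The standard normal cumulative distribution function `Φ`. -/
noncomputable def stdNormalCDF (t : ℝ) : ℝ := (gaussianReal 0 1 (Set.Iic t)).toReal

lemma gauss_apply (s : Set ℝ) :
    gaussianReal 0 1 s = ∫⁻ x in s, gaussianPDF 0 1 x := gaussianReal_apply 0 one_ne_zero s

lemma gauss_ne_top (s : Set ℝ) : gaussianReal 0 1 s ≠ ⊤ := measure_ne_top _ _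

lemma ofReal_stdNormalCDF (t : ℝ) :
    ENNReal.ofReal (stdNormalCDF t) = gaussianReal 0 1 (Set.Iic t) := by
  rw [stdNormalCDF, ENNReal.ofReal_toReal (gauss_ne_top _)]

lemma gauss_pos {s : Set ℝ} (hs : MeasurableSet s) (h : 0 < volume s) :
    0 < gaussianReal 0 1 s := by
  rw [gauss_apply, pos_iff_ne_zero]
  intro hzero
  rw [lintegral_eq_zero_iff (measurable_gaussianPDF 0 1)] at hzero
  have : (volume.restrict s) {x | gaussianPDF 0 1 x ≠ 0} = 0 := by
    simpa [Filter.EventuallyEq, ae_iff] using hzero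
  rw [Measure.restrict_apply] at this
  · have hsub : s ⊆ {x | gaussianPDF 0 1 x ≠ 0} ∩ s := fun x hx =>
      ⟨(gaussianPDF_pos 0 one_ne_zero x).ne', hx⟩
    have := measure_mono_null hsub this
    exact absurd this h.ne'
  · exact (measurable_gaussianPDF 0 1 (measurableSet_singleton 0)).compl



lemma stdNormalCDF_strictMono : StrictMono stdNormalCDF := by
  intro a b hab
  rw [stdNormalCDF, stdNormalCDF]
  have h1 : gaussianReal 0 1 (Set.Iic a) < gaussianReal 0 1 (Set.Iic b) := by
    have hsplit : Set.Iic b = Set.Iic a ∪ Set.Ioc a b := by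
      rw [Set.Iic_union_Ioc_eq_Iic hab.le]
    rw [hsplit, measure_union (Set.Iic_disjoint_Ioc le_rfl) measurableSet_Ioc]
    have hpos : 0 < gaussianReal 0 1 (Set.Ioc a b) :=
      gauss_pos measurableSet_Ioc (by simp [hab])
    exact ENNReal.lt_add_right (gauss_ne_top _) hpos.ne'
  exact ENNReal.toReal_lt_toReal (gauss_ne_top _) (gauss_ne_top _) |>.mpr h1

lemma stdNormalCDF_mem_Ioo (t : ℝ) : stdNormalCDF t ∈ Set.Ioo (0:ℝ) 1 := by
  constructor
  · rw [stdNormalCDF]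
    have h : 0 < gaussianReal 0 1 (Set.Iic t) :=
      lt_of_lt_of_le (gauss_pos measurableSet_Ioc (by simp) : 0 < gaussianReal 0 1 (Set.Ioc (t-1) t))
        (measure_mono (Set.Ioc_subset_Iic_self.trans (Set.Iic_subset_Iic.mpr le_rfl)))
    exact ENNReal.toReal_pos h.ne' (gauss_ne_top _)
  · rw [stdNormalCDF]
    have hlt : gaussianReal 0 1 (Set.Iic t) < 1 := by
      have h2 : 0 < gaussianReal 0 1 (Set.Ioi t) :=
        lt_of_lt_of_le (gauss_pos measurableSet_Ioc (by simp) : 0 < gaussianReal 0 1 (Set.Ioc t (t+1)))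
          (measure_mono Set.Ioc_subset_Ioi_self)
      have huniv : gaussianReal 0 1 (Set.Iic t) + gaussianReal 0 1 (Set.Ioi t) = 1 := by
        rw [← measure_union (Set.Iic_disjoint_Ioi le_rfl) measurableSet_Ioi, Set.Iic_union_Ioi,
          measure_univ]
      calc gaussianReal 0 1 (Set.Iic t) < gaussianReal 0 1 (Set.Iic t) + gaussianReal 0 1 (Set.Ioi t) :=
            ENNReal.lt_add_right (gauss_ne_top _) h2.ne'
        _ = 1 := huniv
    simpa [stdNormalCDF] using (ENNReal.toReal_lt_toReal (gauss_ne_top _) (by simp)).mpr hlt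

lemma gauss_Ioi (t : ℝ) : gaussianReal 0 1 (Set.Ioi t) = ENNReal.ofReal (1 - stdNormalCDF t) := by
  have huniv : gaussianReal 0 1 (Set.Iic t) + gaussianReal 0 1 (Set.Ioi t) = 1 := by
    rw [← measure_union (Set.Iic_disjoint_Ioi le_rfl) measurableSet_Ioi, Set.Iic_union_Ioi,
      measure_univ]
  have hto := congrArg ENNReal.toReal huniv
  rw [ENNReal.toReal_add (gauss_ne_top (Set.Iic t)) (gauss_ne_top (Set.Ioi t)),
    ENNReal.toReal_one] at hto
  have h2 : (gaussianReal 0 1 (Set.Ioi t)).toReal = 1 - stdNormalCDF t := by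
    rw [stdNormalCDF] at *; linarith [hto]
  rw [← h2, ENNReal.ofReal_toReal (gauss_ne_top _)]

lemma gauss_map_neg : Measure.map (fun x => -x) (gaussianReal 0 1) = gaussianReal 0 1 := by
  have := gaussianReal_map_const_mul (μ := 0) (v := 1) (-1)
  simp only [neg_mul, one_mul, mul_zero] at this
  have heq : (fun x : ℝ => -x) = fun x : ℝ => (-1) * x := by funext x; ring
  rw [heq] at this ⊢
  rw [this]
  congr 1
  ext : 1
  norm_num

lemma gauss_singleton (a : ℝ) : gaussianReal 0 1 {a} = 0 := by
  rw [gaussianReal_of_var_ne_zero 0 one_ne_zero]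
  exact (withDensity_absolutelyContinuous _ _) (measure_singleton a)

lemma gauss_Ioi_eq_Iic_neg (t : ℝ) :
    gaussianReal 0 1 (Set.Ioi t) = gaussianReal 0 1 (Set.Iic (-t)) := by
  conv_rhs => rw [← gauss_map_neg]
  rw [Measure.map_apply measurable_neg measurableSet_Iic]
  have : (fun x : ℝ => -x) ⁻¹' Set.Iic (-t) = Set.Ici t := by
    ext x; simp
  rw [this]
  have h : gaussianReal 0 1 (Set.Ici t) ≤ gaussianReal 0 1 (Set.Ioi t) + gaussianReal 0 1 {t} := by
    refine le_trans (measure_mono ?_) (measure_union_le _ _)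
    intro x hx
    rcases eq_or_lt_of_le (Set.mem_Ici.mp hx : t ≤ x) with h | h
    · exact Or.inr (by simp [h.symm])
    · exact Or.inl h
  have h2 : gaussianReal 0 1 (Set.Ioi t) ≤ gaussianReal 0 1 (Set.Ici t) :=
    measure_mono Set.Ioi_subset_Ici_self
  rw [gauss_singleton, add_zero] at h
  exact le_antisymm h2 h

lemma conv_pdfReal (t : ℝ) :
    ∫ y, gaussianPDFReal 0 1 y * gaussianPDFReal 0 1 (t - y) = gaussianPDFReal 0 2 t := by
  have hπ : (0:ℝ) < π := Real.pi_pos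
  have hexp : ∀ y : ℝ, gaussianPDFReal 0 1 y * gaussianPDFReal 0 1 (t - y)
      = ((√(2 * π))⁻¹ * (√(2 * π))⁻¹ * rexp (- t^2 / 4)) * rexp (- (y - t/2)^2) := by
    intro y
    simp only [gaussianPDFReal, NNReal.coe_one, mul_one, sub_zero]
    calc (√(2*π))⁻¹ * rexp (-y^2/2) * ((√(2*π))⁻¹ * rexp (-(t-y)^2/2))
        = (√(2*π))⁻¹ * (√(2*π))⁻¹ * rexp (-y^2/2 + -(t-y)^2/2) := by
          rw [mul_mul_mul_comm, ← Real.exp_add]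
      _ = (√(2*π))⁻¹ * (√(2*π))⁻¹ * rexp (-t^2/4 + -(y-t/2)^2) := by
          congr 1
          ring
      _ = (√(2*π))⁻¹ * (√(2*π))⁻¹ * rexp (-t^2/4) * rexp (-(y-t/2)^2) := by
          rw [Real.exp_add]; ring
  simp_rw [hexp]
  rw [integral_const_mul]
  have hint : ∫ y : ℝ, rexp (-(y - t/2)^2) = √π := by
    rw [integral_sub_right_eq_self (fun y => rexp (-y^2)) (t/2)]
    simpa using integral_gaussian 1
  rw [hint]
  simp only [gaussianPDFReal, sub_zero, NNReal.coe_ofNat]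
  have hmul : (√(2*π))⁻¹ * (√(2*π))⁻¹ = (2*π)⁻¹ := by
    rw [← mul_inv, Real.mul_self_sqrt (by positivity)]
  have hsq : √π * √π = π := Real.mul_self_sqrt hπ.le
  have h4 : √(2 * π * 2) = 2 * √π := by
    rw [show (2:ℝ) * π * 2 = 4 * π by ring, Real.sqrt_mul (by norm_num),
      show √(4:ℝ) = 2 by rw [show (4:ℝ) = 2^2 by norm_num, Real.sqrt_sq (by norm_num)]]
  rw [h4, show (2:ℝ)*2 = 4 by norm_num]
  have hsπ : √π ≠ 0 := by positivity
  have h2 : √(2:ℝ) * √(2:ℝ) = 2 := Real.mul_self_sqrt (by norm_num)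
  field_simp
  rw [Real.sq_sqrt hπ.le, Real.sq_sqrt (by positivity)]

lemma integrable_conv (t : ℝ) :
    Integrable (fun y => gaussianPDFReal 0 1 y * gaussianPDFReal 0 1 (t - y)) := by
  have hbd : ∀ x : ℝ, ‖gaussianPDFReal 0 1 (t - x)‖ ≤ (√(2 * π))⁻¹ := by
    intro x
    rw [Real.norm_of_nonneg (gaussianPDFReal_nonneg 0 1 _), gaussianPDFReal]
    simp only [NNReal.coe_one, mul_one]
    have hle : rexp (-(t - x - 0)^2 / 2) ≤ 1 := by
      rw [Real.exp_le_one_iff]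
      nlinarith [sq_nonneg (t - x - 0)]
    calc (√(2*π))⁻¹ * rexp (-(t - x - 0)^2 / 2)
        ≤ (√(2*π))⁻¹ * 1 := mul_le_mul_of_nonneg_left hle (by positivity)
      _ = (√(2*π))⁻¹ := mul_one _
  have h := (integrable_gaussianPDFReal 0 1).bdd_mul
    ((measurable_gaussianPDFReal 0 1).comp (measurable_const.sub measurable_id)).aestronglyMeasurable
    (ae_of_all _ hbd)
  refine h.congr (ae_of_all _ fun y => ?_)
  simp [mul_comm]

lemma conv_pdf (t : ℝ) :
    ∫⁻ y, gaussianPDF 0 1 y * gaussianPDF 0 1 (t - y) = gaussianPDF 0 2 t := by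
  simp only [gaussianPDF]
  have : ∀ y : ℝ, ENNReal.ofReal (gaussianPDFReal 0 1 y) * ENNReal.ofReal (gaussianPDFReal 0 1 (t - y))
      = ENNReal.ofReal (gaussianPDFReal 0 1 y * gaussianPDFReal 0 1 (t - y)) :=
    fun y => (ENNReal.ofReal_mul (gaussianPDFReal_nonneg 0 1 y)).symm
  simp_rw [this]
  rw [← ofReal_integral_eq_lintegral_ofReal (integrable_conv t)
    (ae_of_all _ fun y => mul_nonneg (gaussianPDFReal_nonneg 0 1 y) (gaussianPDFReal_nonneg 0 1 _)),
    conv_pdfReal]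

lemma gauss_scale (lam : ℝ) :
    gaussianReal 0 2 (Set.Iic lam) = gaussianReal 0 1 (Set.Iic (lam / √2)) := by
  have h := gaussianReal_map_const_mul (μ := 0) (v := 1) (√2)
  have h2 : (NNReal.mk ((√2:ℝ)^2) (sq_nonneg _)) * 1 = 2 := by
    ext
    simp [Real.sq_sqrt (by norm_num : (2:ℝ) ≥ 0)]
  rw [mul_zero, h2] at h
  rw [← h, Measure.map_apply (measurable_const_mul _) measurableSet_Iic]
  congr 1
  ext x
  simp only [Set.mem_preimage, Set.mem_Iic]
  rw [le_div_iff₀ (by positivity : (0:ℝ) < √2)]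
  constructor <;> intro hx <;> linarith [hx]

lemma shift_Iic (c y : ℝ) :
    ∫⁻ x in Set.Iic (c - y), gaussianPDF 0 1 x
      = ∫⁻ t in Set.Iic c, gaussianPDF 0 1 (t - y) := by
  have hmeas := measurable_gaussianPDF 0 1
  rw [← lintegral_indicator measurableSet_Iic, ← lintegral_indicator measurableSet_Iic]
  have := lintegral_add_right_eq_self
    (μ := (volume : Measure ℝ))
    ((Set.Iic c).indicator (fun t => gaussianPDF 0 1 (t - y))) y
  rw [← this]
  congr 1
  funext s
  by_cases hs : s ≤ c - y
  · rw [Set.indicator_of_mem (by simpa using hs),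
      Set.indicator_of_mem (by simp [Set.mem_Iic]; linarith)]
    simp
  · rw [Set.indicator_of_notMem (by simpa using hs),
      Set.indicator_of_notMem (by simp only [Set.mem_Iic, not_le]; linarith)]

lemma key2 (lam : ℝ) :
    ∫⁻ y, gaussianReal 0 1 (Set.Iic (lam - y)) ∂(gaussianReal 0 1)
      = gaussianReal 0 1 (Set.Iic (lam / √2)) := by
  rw [← gauss_scale]
  have hpdf := measurable_gaussianPDF 0 1
  have hinner : ∀ y : ℝ, gaussianReal 0 1 (Set.Iic (lam - y))
      = ∫⁻ t in Set.Iic lam, gaussianPDF 0 1 (t - y) := by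
    intro y
    rw [gaussianReal_apply 0 one_ne_zero, shift_Iic]
  simp_rw [hinner]
  have hm2 : Measurable (Function.uncurry fun y t => gaussianPDF 0 1 y * gaussianPDF 0 1 (t - y)) := by
    change Measurable ((fun p : ℝ × ℝ => gaussianPDF 0 1 p.1) * (fun p : ℝ × ℝ => gaussianPDF 0 1 (p.2 - p.1)))
    apply Measurable.mul
    · exact hpdf.comp measurable_fst
    · exact hpdf.comp (measurable_snd.sub measurable_fst)
  rw [gaussianReal_of_var_ne_zero 0 one_ne_zero,
    lintegral_withDensity_eq_lintegral_mul _ hpdf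
      (by
        apply Measurable.lintegral_prod_right (f := fun y t => gaussianPDF 0 1 (t - y))
        exact hpdf.comp (measurable_snd.sub measurable_fst))]
  simp only [Pi.mul_apply]
  have hconstmul : ∀ y : ℝ, gaussianPDF 0 1 y * ∫⁻ t in Set.Iic lam, gaussianPDF 0 1 (t - y)
      = ∫⁻ t in Set.Iic lam, gaussianPDF 0 1 y * gaussianPDF 0 1 (t - y) := by
    intro y
    exact (lintegral_const_mul _ (hpdf.comp (measurable_id'.sub measurable_const))).symm
  simp_rw [hconstmul]
  rw [lintegral_lintegral_swap hm2.aemeasurable]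
  simp_rw [conv_pdf]
  rw [← gaussianReal_apply 0 (two_ne_zero)]

/-- For every `λ ∈ ℝ`, `∫₀¹ Φ(Φ⁻¹(u) + λ) du = Φ(λ/√2)`, where `Φinv` is any right
inverse of the standard normal cdf on `(0,1)`. -/
theorem integral_cdf_shift_quantile
    (Φinv : ℝ → ℝ) (hΦinv : ∀ p ∈ Set.Ioo (0 : ℝ) 1, stdNormalCDF (Φinv p) = p)
    (lam : ℝ) :
    ∫ u in (0 : ℝ)..1, stdNormalCDF (Φinv u + lam) = stdNormalCDF (lam / Real.sqrt 2) := by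
  set μ := gaussianReal 0 1 with hμ
  set g : ℝ → ℝ := fun u => stdNormalCDF (Φinv u + lam) with hg
  -- monotonicity of g on Ioo 0 1
  have hmono : MonotoneOn g (Set.Ioo 0 1) := by
    intro p hp q hq hpq
    apply (stdNormalCDF_strictMono.monotone)
    have : Φinv p ≤ Φinv q := by
      by_contra hcon
      push_neg at hcon
      have := stdNormalCDF_strictMono hcon
      rw [hΦinv p hp, hΦinv q hq] at this
      linarith
    linarith
  have hg01 : ∀ u, g u ∈ Set.Icc (0:ℝ) 1 :=
    fun u => ⟨(stdNormalCDF_mem_Ioo _).1.le, (stdNormalCDF_mem_Ioo _).2.le⟩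
  -- reduce to set integral over Ioo 0 1
  have hIoo : volume.restrict (Set.Ioc (0:ℝ) 1) = volume.restrict (Set.Ioo (0:ℝ) 1) :=
    (Measure.restrict_congr_set Ioo_ae_eq_Ioc).symm
  rw [intervalIntegral.integral_of_le zero_le_one, hIoo]
  have hae : AEMeasurable g (volume.restrict (Set.Ioo (0:ℝ) 1)) :=
    aemeasurable_restrict_of_monotoneOn measurableSet_Ioo hmono
  rw [integral_eq_lintegral_of_nonneg_ae (ae_of_all _ fun u => (hg01 u).1)
    hae.aestronglyMeasurable]
  -- identify the lintegral
  have hkey : ∫⁻ u in Set.Ioo (0:ℝ) 1, ENNReal.ofReal (g u)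
      = μ (Set.Iic (lam / √2)) := by
    have hstep1 : ∀ u ∈ Set.Ioo (0:ℝ) 1,
        ENNReal.ofReal (g u) = μ {y | stdNormalCDF (y - lam) ≤ u} := by
      intro u hu
      have hset : Set.Iic (Φinv u + lam) = {y | stdNormalCDF (y - lam) ≤ u} := by
        ext y
        simp only [Set.mem_Iic, Set.mem_setOf_eq]
        have h1 : y ≤ Φinv u + lam ↔ y - lam ≤ Φinv u := by
          constructor <;> intro h <;> linarith
        have h2 : y - lam ≤ Φinv u ↔ stdNormalCDF (y - lam) ≤ stdNormalCDF (Φinv u) :=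
          (stdNormalCDF_strictMono.le_iff_le).symm
        rw [h1, h2, hΦinv u hu]
      rw [hg, ofReal_stdNormalCDF, hset]
    rw [setLIntegral_congr_fun measurableSet_Ioo hstep1]
    -- product measure
    set ν := volume.restrict (Set.Ioo (0:ℝ) 1) with hν
    have hΦmeas : Measurable stdNormalCDF := stdNormalCDF_strictMono.monotone.measurable
    have hS : MeasurableSet {p : ℝ × ℝ | stdNormalCDF (p.2 - lam) ≤ p.1} :=
      measurableSet_le (hΦmeas.comp (measurable_snd.sub measurable_const)) measurable_fst
    have h1 : ∫⁻ u, μ {y | stdNormalCDF (y - lam) ≤ u} ∂ν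
        = (ν.prod μ) {p : ℝ × ℝ | stdNormalCDF (p.2 - lam) ≤ p.1} := by
      rw [Measure.prod_apply hS]
      simp only [Set.preimage_setOf_eq]
    have h2 : (ν.prod μ) {p : ℝ × ℝ | stdNormalCDF (p.2 - lam) ≤ p.1}
        = ∫⁻ y, ν (Set.Ici (stdNormalCDF (y - lam))) ∂μ := by
      rw [Measure.prod_apply_symm hS]
      simp only [Set.preimage_setOf_eq]
      rfl
    have h3 : ∀ y : ℝ, ν (Set.Ici (stdNormalCDF (y - lam)))
        = μ (Set.Iic (lam - y)) := by
      intro y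
      set c := stdNormalCDF (y - lam) with hc
      have hc01 := stdNormalCDF_mem_Ioo (y - lam)
      rw [hν, Measure.restrict_apply measurableSet_Ici]
      have : Set.Ici c ∩ Set.Ioo 0 1 = Set.Ico c 1 := by
        ext x
        simp only [Set.mem_inter_iff, Set.mem_Ici, Set.mem_Ioo, Set.mem_Ico]
        constructor
        · rintro ⟨h1', h2', h3'⟩; exact ⟨h1', h3'⟩
        · rintro ⟨h1', h2'⟩; exact ⟨h1', lt_of_lt_of_le hc01.1 h1', h2'⟩
      rw [this, Real.volume_Ico, ← gauss_Ioi, gauss_Ioi_eq_Iic_neg, neg_sub]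
    rw [h1, h2]
    simp_rw [h3]
    exact key2 lam
  rw [hkey, ← ofReal_stdNormalCDF, ENNReal.toReal_ofReal (stdNormalCDF_mem_Ioo _).1.le]
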